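/- Let (Ω, F, P) be a probability space with a filtration (F_L)_{L∈ℕ}, let ε > 0, and let Z_1, ..., Z_n be random variables measurable with respect to F_∞ = ∨_L F_L, with ε ≤ Z_i ≤ 1 almost surely for each i. Let B_1, ..., B_n > 0 be constants. For m ∈ ℕ set L(m) = ⌊√m⌋ and w_i^{(m)} = E[Z_i | F_{L(m)}]; define m_i(m) = max{ L(m), ⌊ m·√(B_i w_i^{(m)}) / ∑_{k=1}^n √(B_k w_k^{(m)}) ⌋ } for i = 1, ..., n−1, and m_n(m) = m − ∑_{i=1}^{n−1} m_i(m). Then lim_{m→∞} m · E[ ∑_{i=1}^n B_i w_i^{(m)} / m_i(m) ] = E[ (∑_{i=1}^n √(B_i Z_i))² ]. -/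

import Mathlib

open MeasureTheory ProbabilityTheory Filter Finset


private lemma natSqrt_tendsto : Tendsto Nat.sqrt atTop atTop := by
  refine tendsto_atTop_atTop.mpr fun b => ⟨b * b, fun a ha => Nat.le_sqrt.mpr ?_⟩
  calc b * b ≤ a := ha

/-- deterministic lower-bound constant. -/
noncomputable def clo (n : ℕ) (B : Fin (n + 1) → ℝ) (ε : ℝ) (i : Fin (n + 1)) : ℝ :=
  Real.sqrt (B i * ε) / ∑ k, Real.sqrt (B k)

lemma clo_pos {n : ℕ} {B : Fin (n + 1) → ℝ} (hB : ∀ i, 0 < B i) {ε : ℝ} (hε : 0 < ε)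
    (i : Fin (n + 1)) : 0 < clo n B ε i :=
  div_pos (Real.sqrt_pos.mpr (mul_pos (hB i) hε))
    (Finset.sum_pos (fun k _ => Real.sqrt_pos.mpr (hB k)) univ_nonempty)

lemma filter_lt_eq_erase (n : ℕ) :
    (Finset.univ.filter (fun i : Fin (n + 1) => (i : ℕ) < n)) =
      Finset.univ.erase (Fin.last n) := by
  ext i
  simp only [mem_filter, mem_univ, true_and, mem_erase, ne_eq, and_true]
  constructor
  · rintro h rfl
    simp only [Fin.val_last, lt_self_iff_false] at h
  · intro h
    have h2 : (i : ℕ) ≤ n := Nat.lt_succ_iff.mp i.isLt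
    rcases h2.lt_or_eq with h3 | h3
    · exact h3
    · exact absurd (Fin.ext (h3.trans (Fin.val_last n).symm)) h

lemma det_bound {n : ℕ} {ε : ℝ} (hε : 0 < ε) {B : Fin (n + 1) → ℝ} (hB : ∀ i, 0 < B i)
    (w : Fin (n + 1) → ℝ) (hw1 : ∀ i, ε ≤ w i) (hw2 : ∀ i, w i ≤ 1)
    (a : Fin (n + 1) → ℝ) (m : ℕ)
    (ha : ∀ i : Fin (n + 1), (i : ℕ) < n → a i = max ((Nat.sqrt m : ℝ))
      ((⌊(m : ℝ) * Real.sqrt (B i * w i) / ∑ k, Real.sqrt (B k * w k)⌋ : ℤ) : ℝ))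
    (han : a (Fin.last n) =
      (m : ℝ) - ∑ i ∈ Finset.univ.filter (fun i : Fin (n + 1) => (i : ℕ) < n), a i)
    (hm1 : ∀ i, 2 / clo n B ε i ≤ (m : ℝ))
    (hm2 : (n : ℝ) * Real.sqrt m ≤ (m : ℝ) * clo n B ε (Fin.last n) / 2) :
    ∀ i, (m : ℝ) * clo n B ε i / 2 ≤ a i := by
  have hclo := clo_pos hB hε
  set S : ℝ := ∑ k, Real.sqrt (B k * w k) with hSdef
  have hSpos : 0 < S :=
    Finset.sum_pos (fun k _ => Real.sqrt_pos.mpr (mul_pos (hB k) (hε.trans_le (hw1 k))))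
      univ_nonempty
  have hShi : S ≤ ∑ k, Real.sqrt (B k) :=
    Finset.sum_le_sum fun k _ => Real.sqrt_le_sqrt (mul_le_of_le_one_right (hB k).le (hw2 k))
  have hr_lb : ∀ i, clo n B ε i ≤ Real.sqrt (B i * w i) / S := fun i =>
    div_le_div₀ (Real.sqrt_nonneg _)
      (Real.sqrt_le_sqrt (mul_le_mul_of_nonneg_left (hw1 i) (hB i).le)) hSpos hShi
  have hrsum : ∑ i, Real.sqrt (B i * w i) / S = 1 := by
    rw [← Finset.sum_div, div_self hSpos.ne']
  have hmclo : ∀ i, 2 ≤ (m : ℝ) * clo n B ε i := fun i => by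
    have h := hm1 i
    rw [div_le_iff₀ (hclo i)] at h
    linarith
  have hmr : ∀ i, (m : ℝ) * clo n B ε i ≤ (m : ℝ) * (Real.sqrt (B i * w i) / S) := fun i =>
    mul_le_mul_of_nonneg_left (hr_lb i) (Nat.cast_nonneg m)
  have key : ∀ i : Fin (n + 1), (i : ℕ) < n → (m : ℝ) * clo n B ε i / 2 ≤ a i := by
    intro i hi
    rw [ha i hi]
    refine le_max_of_le_right ?_
    have h3 := Int.sub_one_lt_floor ((m : ℝ) * Real.sqrt (B i * w i) / S)
    have heq : (m : ℝ) * Real.sqrt (B i * w i) / S = (m : ℝ) * (Real.sqrt (B i * w i) / S) :=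
      mul_div_assoc _ _ _
    have := hmr i
    have := hmclo i
    linarith
  have upper : ∀ i : Fin (n + 1), (i : ℕ) < n →
      a i ≤ Real.sqrt m + (m : ℝ) * (Real.sqrt (B i * w i) / S) := by
    intro i hi
    rw [ha i hi]
    refine max_le ?_ ?_
    · have h1 : ((Nat.sqrt m : ℕ) : ℝ) ≤ Real.sqrt m := Real.nat_sqrt_le_real_sqrt
      have h2 : 0 ≤ (m : ℝ) * (Real.sqrt (B i * w i) / S) :=
        mul_nonneg (Nat.cast_nonneg m) (div_nonneg (Real.sqrt_nonneg _) hSpos.le)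
      linarith
    · have h1 := Int.floor_le ((m : ℝ) * Real.sqrt (B i * w i) / S)
      have heq : (m : ℝ) * Real.sqrt (B i * w i) / S = (m : ℝ) * (Real.sqrt (B i * w i) / S) :=
        mul_div_assoc _ _ _
      have := Real.sqrt_nonneg (m : ℝ)
      linarith
  intro i
  by_cases hi : (i : ℕ) < n
  · exact key i hi
  · have hilast : i = Fin.last n := by
      have := i.isLt
      apply Fin.ext
      simp only [Fin.val_last]
      omega
    subst hilast
    rw [han]
    set T := Finset.univ.filter (fun i : Fin (n + 1) => (i : ℕ) < n) with hTdef
    have hT : T = Finset.univ.erase (Fin.last n) := filter_lt_eq_erase n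
    have hcard : T.card = n := by
      rw [hT, card_erase_of_mem (mem_univ _), card_univ, Fintype.card_fin]
      rfl
    have hrT : ∑ j ∈ T, Real.sqrt (B j * w j) / S
        = 1 - Real.sqrt (B (Fin.last n) * w (Fin.last n)) / S := by
      rw [hT, Finset.sum_erase_eq_sub (mem_univ _), hrsum]
    have hsumT : ∑ j ∈ T, a j ≤ (n : ℝ) * Real.sqrt m
        + (m : ℝ) * (1 - Real.sqrt (B (Fin.last n) * w (Fin.last n)) / S) := by
      calc ∑ j ∈ T, a j
          ≤ ∑ j ∈ T, (Real.sqrt m + (m : ℝ) * (Real.sqrt (B j * w j) / S)) := by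
            refine Finset.sum_le_sum fun j hj => upper j ?_
            rw [hTdef, mem_filter] at hj
            exact hj.2
        _ = (T.card : ℝ) * Real.sqrt m + (m : ℝ) * ∑ j ∈ T, Real.sqrt (B j * w j) / S := by
            rw [Finset.sum_add_distrib, Finset.sum_const, nsmul_eq_mul, ← Finset.mul_sum]
        _ = (n : ℝ) * Real.sqrt m
            + (m : ℝ) * (1 - Real.sqrt (B (Fin.last n) * w (Fin.last n)) / S) := by
            rw [hcard, hrT]
    have hmr' := hmr (Fin.last n)
    have hexp : (m : ℝ) * (1 - Real.sqrt (B (Fin.last n) * w (Fin.last n)) / S)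
        = (m : ℝ) - (m : ℝ) * (Real.sqrt (B (Fin.last n) * w (Fin.last n)) / S) := by ring
    rw [hexp] at hsumT
    linarith




lemma det_tendsto {n : ℕ} {ε : ℝ} (hε : 0 < ε) {B : Fin (n + 1) → ℝ} (hB : ∀ i, 0 < B i)
    (Zv : Fin (n + 1) → ℝ) (hZv : ∀ i, ε ≤ Zv i)
    (w : ℕ → Fin (n + 1) → ℝ) (hw1 : ∀ m i, ε ≤ w m i)
    (hwt : ∀ i, Tendsto (fun m => w m i) atTop (nhds (Zv i)))
    (a : ℕ → Fin (n + 1) → ℝ)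
    (ha : ∀ m (i : Fin (n + 1)), (i : ℕ) < n → a m i = max ((Nat.sqrt m : ℝ))
      ((⌊(m : ℝ) * Real.sqrt (B i * w m i) / ∑ k, Real.sqrt (B k * w m k)⌋ : ℤ) : ℝ))
    (han : ∀ m, a m (Fin.last n) =
      (m : ℝ) - ∑ i ∈ Finset.univ.filter (fun i : Fin (n + 1) => (i : ℕ) < n), a m i) :
    Tendsto (fun m : ℕ => (m : ℝ) * ∑ i, B i * w m i / a m i) atTop
      (nhds ((∑ i, Real.sqrt (B i * Zv i)) ^ 2)) := by
  set Sl : ℝ := ∑ i, Real.sqrt (B i * Zv i) with hSldef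
  have hSlpos : 0 < Sl :=
    Finset.sum_pos (fun k _ => Real.sqrt_pos.mpr (mul_pos (hB k) (hε.trans_le (hZv k))))
      univ_nonempty
  have hS : Tendsto (fun m => ∑ k, Real.sqrt (B k * w m k)) atTop (nhds Sl) :=
    tendsto_finset_sum _ (fun k _ => ((hwt k).const_mul (B k)).sqrt)
  set r : Fin (n + 1) → ℝ := fun i => Real.sqrt (B i * Zv i) / Sl with hrdef
  have hrpos : ∀ i, 0 < r i := fun i =>
    div_pos (Real.sqrt_pos.mpr (mul_pos (hB i) (hε.trans_le (hZv i)))) hSlpos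
  have hr : ∀ i, Tendsto (fun m => Real.sqrt (B i * w m i) / ∑ k, Real.sqrt (B k * w m k))
      atTop (nhds (r i)) := fun i =>
    (((hwt i).const_mul (B i)).sqrt).div hS hSlpos.ne'
  have hrsum : ∑ i, r i = 1 := by
    rw [hrdef, ← Finset.sum_div, div_self hSlpos.ne']
  -- floor ratio tendsto
  have hfloor : ∀ i : Fin (n + 1), Tendsto (fun m : ℕ =>
      ((⌊(m : ℝ) * Real.sqrt (B i * w m i) / ∑ k, Real.sqrt (B k * w m k)⌋ : ℤ) : ℝ) / m)
      atTop (nhds (r i)) := by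
    intro i
    have hlo : Tendsto (fun m : ℕ =>
        (Real.sqrt (B i * w m i) / ∑ k, Real.sqrt (B k * w m k)) - 1 / m) atTop (nhds (r i)) := by
      have := (hr i).sub tendsto_one_div_atTop_nhds_zero_nat
      simpa using this
    refine tendsto_of_tendsto_of_tendsto_of_le_of_le' hlo (hr i) ?_ ?_
    · filter_upwards [eventually_ge_atTop 1] with m hm
      have hm0 : (0 : ℝ) < m := by exact_mod_cast hm
      set x := (m : ℝ) * Real.sqrt (B i * w m i) / ∑ k, Real.sqrt (B k * w m k) with hx
      have h1 : x - 1 < (⌊x⌋ : ℝ) := Int.sub_one_lt_floor x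
      have heq : x = (m : ℝ) * (Real.sqrt (B i * w m i) / ∑ k, Real.sqrt (B k * w m k)) :=
        mul_div_assoc _ _ _
      have h2 : (x - 1) / m ≤ ((⌊x⌋ : ℤ) : ℝ) / m := (div_le_div_iff_of_pos_right hm0).mpr h1.le
      have h3 : (x - 1) / m
          = (Real.sqrt (B i * w m i) / ∑ k, Real.sqrt (B k * w m k)) - 1 / m := by
        rw [heq]
        field_simp
      linarith
    · filter_upwards [eventually_ge_atTop 1] with m hm
      have hm0 : (0 : ℝ) < m := by exact_mod_cast hm
      set x := (m : ℝ) * Real.sqrt (B i * w m i) / ∑ k, Real.sqrt (B k * w m k) with hx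
      have h2 : ((⌊x⌋ : ℤ) : ℝ) / m ≤ x / m := (div_le_div_iff_of_pos_right hm0).mpr (Int.floor_le x)
      have h3 : x / m = Real.sqrt (B i * w m i) / ∑ k, Real.sqrt (B k * w m k) := by
        rw [hx, mul_div_assoc, mul_div_cancel_left₀ _ hm0.ne']
      linarith
  -- sqrt m / m tendsto 0
  have hns : Tendsto (fun m : ℕ => ((Nat.sqrt m : ℕ) : ℝ) / m) atTop (nhds 0) := by
    have hup : Tendsto (fun m : ℕ => 1 / ((Nat.sqrt m : ℕ) : ℝ)) atTop (nhds 0) :=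
      tendsto_one_div_atTop_nhds_zero_nat.comp natSqrt_tendsto
    refine tendsto_of_tendsto_of_tendsto_of_le_of_le' tendsto_const_nhds hup ?_ ?_
    · exact Eventually.of_forall fun m => div_nonneg (Nat.cast_nonneg _) (Nat.cast_nonneg _)
    · filter_upwards [eventually_ge_atTop 1] with m hm
      have hs1 : 1 ≤ Nat.sqrt m := Nat.sqrt_pos.mpr hm
      have hs1' : (1 : ℝ) ≤ ((Nat.sqrt m : ℕ) : ℝ) := by exact_mod_cast hs1
      have hss : ((Nat.sqrt m : ℕ) : ℝ) * ((Nat.sqrt m : ℕ) : ℝ) ≤ (m : ℝ) := by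
        have := Nat.sqrt_le' m
        have h2 : Nat.sqrt m * Nat.sqrt m ≤ m := by
          simpa [pow_two] using this
        exact_mod_cast h2
      have h4 : ((Nat.sqrt m : ℕ) : ℝ) / m
          ≤ ((Nat.sqrt m : ℕ) : ℝ) / (((Nat.sqrt m : ℕ) : ℝ) * ((Nat.sqrt m : ℕ) : ℝ)) :=
        div_le_div_of_nonneg_left (Nat.cast_nonneg _) (by nlinarith) hss
      have h5 : ((Nat.sqrt m : ℕ) : ℝ) / (((Nat.sqrt m : ℕ) : ℝ) * ((Nat.sqrt m : ℕ) : ℝ))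
          = 1 / ((Nat.sqrt m : ℕ) : ℝ) := by
        rw [div_mul_eq_div_div_swap, div_self (by linarith)]
      linarith
  -- ratio tendsto for each index
  have hratioT : ∀ i : Fin (n + 1), (i : ℕ) < n →
      Tendsto (fun m => a m i / m) atTop (nhds (r i)) := by
    intro i hi
    have key := hns.max (hfloor i)
    rw [max_eq_right (hrpos i).le] at key
    refine key.congr' ?_
    filter_upwards [eventually_ge_atTop 1] with m hm
    have hm0 : (0 : ℝ) ≤ m := Nat.cast_nonneg m
    rw [ha m i hi, max_div_div_right hm0]
  have hratio : ∀ i : Fin (n + 1), Tendsto (fun m => a m i / m) atTop (nhds (r i)) := by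
    intro i
    by_cases hi : (i : ℕ) < n
    · exact hratioT i hi
    · have hilast : i = Fin.last n := by
        have := i.isLt
        apply Fin.ext
        simp only [Fin.val_last]
        omega
      subst hilast
      set T := Finset.univ.filter (fun i : Fin (n + 1) => (i : ℕ) < n) with hTdef
      have hrT : ∑ j ∈ T, r j = 1 - r (Fin.last n) := by
        rw [hTdef, filter_lt_eq_erase n, Finset.sum_erase_eq_sub (mem_univ _), hrsum]
      have key : Tendsto (fun m => 1 - ∑ j ∈ T, a m j / m) atTop (nhds (r (Fin.last n))) := by
        have h1 : Tendsto (fun m => ∑ j ∈ T, a m j / m) atTop (nhds (∑ j ∈ T, r j)) :=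
          tendsto_finset_sum _ (fun j hj => hratioT j (by
            rw [hTdef, mem_filter] at hj; exact hj.2))
        have h2 := (tendsto_const_nhds : Tendsto (fun _ : ℕ => (1 : ℝ)) atTop (nhds 1)).sub h1
        rw [hrT] at h2
        simpa using h2
      refine key.congr' ?_
      filter_upwards [eventually_ge_atTop 1] with m hm
      have hm0 : (0 : ℝ) < m := by exact_mod_cast hm
      rw [han m, sub_div, Finset.sum_div, div_self hm0.ne']
  -- final assembly
  have hterm : ∀ i : Fin (n + 1), Tendsto (fun m => (B i * w m i) / (a m i / m)) atTop
      (nhds (Real.sqrt (B i * Zv i) * Sl)) := by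
    intro i
    have h1 := ((hwt i).const_mul (B i)).div (hratio i) (hrpos i).ne'
    have hlim : B i * Zv i / r i = Real.sqrt (B i * Zv i) * Sl := by
      rw [hrdef]
      rw [div_div_eq_mul_div, mul_comm (B i * Zv i) Sl, mul_div_assoc, Real.div_sqrt, mul_comm]
    rwa [hlim] at h1
  have hsum : Tendsto (fun m => ∑ i, (B i * w m i) / (a m i / m)) atTop
      (nhds ((∑ i, Real.sqrt (B i * Zv i)) ^ 2)) := by
    have h1 := tendsto_finset_sum Finset.univ (fun i (_ : i ∈ Finset.univ) => hterm i)
    have h2 : ∑ i, Real.sqrt (B i * Zv i) * Sl = (∑ i, Real.sqrt (B i * Zv i)) ^ 2 := by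
      rw [← Finset.sum_mul, ← hSldef, sq]
    rwa [h2] at h1
  refine hsum.congr fun m => ?_
  rw [Finset.mul_sum]
  refine Finset.sum_congr rfl fun i _ => ?_
  rw [div_div_eq_mul_div, mul_comm (B i * w m i) (m : ℝ), mul_div_assoc]

/-- First-order optimality of the hybrid two-stage design for the parallel-series system:
`m · E[∑ B i · w i (m) / m i (m)] → E[(∑ √(B i · Z i))²]`. -/
theorem hybrid_first_order_optimality {Ω : Type*} {mΩ : MeasurableSpace Ω} (P : Measure Ω)
    [IsProbabilityMeasure P] (F : ℕ → MeasurableSpace Ω)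
    (hFmono : Monotone F) (hFle : ∀ L, F L ≤ mΩ)
    (ε : ℝ) (hε : 0 < ε)
    (n : ℕ) (Z : Fin (n + 1) → Ω → ℝ)
    (hZmeas : ∀ i, Measurable[⨆ L, F L] (Z i))
    (hZ : ∀ i, ∀ᵐ ω ∂P, Z i ω ∈ Set.Icc ε 1)
    (B : Fin (n + 1) → ℝ) (hB : ∀ i, 0 < B i)
    (alloc : ℕ → Fin (n + 1) → Ω → ℤ)
    (hAlloc : ∀ m (ω : Ω) (i : Fin (n + 1)), (i : ℕ) < n →
      alloc m i ω = max (Nat.sqrt m : ℤ)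
        ⌊(m : ℝ) * Real.sqrt (B i * (P[Z i | F (Nat.sqrt m)]) ω) /
          ∑ k, Real.sqrt (B k * (P[Z k | F (Nat.sqrt m)]) ω)⌋)
    (hAllocLast : ∀ m (ω : Ω),
      alloc m (Fin.last n) ω =
        (m : ℤ) - ∑ i ∈ Finset.univ.filter (fun i : Fin (n + 1) => (i : ℕ) < n),
          alloc m i ω) :
    Tendsto (fun m : ℕ =>
        (m : ℝ) * ∫ ω, ∑ i, B i * (P[Z i | F (Nat.sqrt m)]) ω / (alloc m i ω : ℝ) ∂P)
      atTop (nhds (∫ ω, (∑ i, Real.sqrt (B i * Z i ω)) ^ 2 ∂P)) := by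
  classical
  set ℱ : Filtration ℕ mΩ := ⟨F, hFmono, hFle⟩ with hℱ
  have hZm : ∀ i, Measurable (Z i) := fun i => (hZmeas i).mono (iSup_le hFle) le_rfl
  have hZint : ∀ i, Integrable (Z i) P := by
    intro i
    refine (integrable_const (1 : ℝ)).mono' (hZm i).aestronglyMeasurable ?_
    filter_upwards [hZ i] with ω hω
    rw [Real.norm_eq_abs, abs_le]
    exact ⟨by linarith [hω.1], hω.2⟩
  have hlevy : ∀ i, ∀ᵐ ω ∂P, Tendsto (fun L => (P[Z i | F L]) ω) atTop (nhds (Z i ω)) :=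
    fun i => (hZint i).tendsto_ae_condExp (ℱ := ℱ) (hZmeas i).stronglyMeasurable
  have hbnd : ∀ᵐ ω ∂P, ∀ (L : ℕ) (i : Fin (n + 1)),
      ε ≤ (P[Z i | F L]) ω ∧ (P[Z i | F L]) ω ≤ 1 := by
    rw [ae_all_iff]
    intro L
    rw [ae_all_iff]
    intro i
    have h1 : (fun _ : Ω => ε) ≤ᵐ[P] Z i := by
      filter_upwards [hZ i] with ω hω using hω.1
    have h2 : Z i ≤ᵐ[P] (fun _ : Ω => (1 : ℝ)) := by
      filter_upwards [hZ i] with ω hω using hω.2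
    have hm1 := condExp_mono (m := F L) (integrable_const ε) (hZint i) h1
    have hm2 := condExp_mono (m := F L) (hZint i) (integrable_const (1 : ℝ)) h2
    rw [condExp_const (hFle L)] at hm1
    rw [condExp_const (hFle L)] at hm2
    filter_upwards [hm1, hm2] with ω hω1 hω2
    exact ⟨hω1, hω2⟩
  have hclo : ∀ i, 0 < clo n B ε i := clo_pos hB hε
  -- eventual arithmetic conditions on m
  have hMcond : ∀ᶠ m : ℕ in atTop, 1 ≤ m ∧ (∀ i, 2 / clo n B ε i ≤ (m : ℝ)) ∧
      (n : ℝ) * Real.sqrt m ≤ (m : ℝ) * clo n B ε (Fin.last n) / 2 := by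
    have hc1 : ∀ᶠ m : ℕ in atTop, 1 ≤ m := eventually_ge_atTop 1
    have hc2 : ∀ᶠ m : ℕ in atTop, ∀ i, 2 / clo n B ε i ≤ (m : ℝ) := by
      exact Filter.eventually_all.mpr fun i =>
        (tendsto_natCast_atTop_atTop (R := ℝ)).eventually_ge_atTop _
    have hc3 : ∀ᶠ m : ℕ in atTop,
        (n : ℝ) * Real.sqrt m ≤ (m : ℝ) * clo n B ε (Fin.last n) / 2 := by
      have hlast := hclo (Fin.last n)
      have h4 : ∀ᶠ m : ℕ in atTop, (2 * n / clo n B ε (Fin.last n)) ^ 2 ≤ (m : ℝ) :=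
        (tendsto_natCast_atTop_atTop (R := ℝ)).eventually_ge_atTop _
      filter_upwards [h4] with m hm
      have hm0 : (0 : ℝ) ≤ m := le_trans (by positivity) hm
      have hsq : Real.sqrt m * Real.sqrt m = (m : ℝ) := Real.mul_self_sqrt hm0
      have hs0 : 0 ≤ Real.sqrt m := Real.sqrt_nonneg _
      have h5 : 2 * n / clo n B ε (Fin.last n) ≤ Real.sqrt m := by
        have := Real.sqrt_le_sqrt hm
        rwa [Real.sqrt_sq (by positivity)] at this
      have h6 : 2 * (n : ℝ) ≤ Real.sqrt m * clo n B ε (Fin.last n) := by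
        rw [div_le_iff₀ hlast] at h5
        linarith
      nlinarith [mul_le_mul_of_nonneg_right h6 hs0]
    filter_upwards [hc1, hc2, hc3] with m h1 h2 h3
    exact ⟨h1, h2, h3⟩
  obtain ⟨M, hM⟩ := eventually_atTop.mp hMcond
  -- move the factor m inside the integral
  have hrw : ∀ m : ℕ,
      (m : ℝ) * ∫ ω, ∑ i, B i * (P[Z i | F (Nat.sqrt m)]) ω / (alloc m i ω : ℝ) ∂P
      = ∫ ω, (m : ℝ) * ∑ i, B i * (P[Z i | F (Nat.sqrt m)]) ω / (alloc m i ω : ℝ) ∂P :=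
    fun m => (integral_const_mul _ _).symm
  simp only [hrw]
  rw [← tendsto_add_atTop_iff_nat M]
  -- measurability of the integrands
  have hwmeas : ∀ m (i : Fin (n + 1)),
      Measurable (fun ω => (P[Z i | F (Nat.sqrt m)]) ω) :=
    fun m i => (stronglyMeasurable_condExp.mono (hFle _)).measurable
  have hallocT : ∀ m (i : Fin (n + 1)), (i : ℕ) < n →
      Measurable (fun ω => ((alloc m i ω : ℤ) : ℝ)) := by
    intro m i hi
    have heq : (fun ω => ((alloc m i ω : ℤ) : ℝ)) = fun ω =>
        ((max (Nat.sqrt m : ℤ) ⌊(m : ℝ) * Real.sqrt (B i * (P[Z i | F (Nat.sqrt m)]) ω) /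
          ∑ k, Real.sqrt (B k * (P[Z k | F (Nat.sqrt m)]) ω)⌋ : ℤ) : ℝ) := by
      funext ω
      rw [hAlloc m ω i hi]
    rw [heq]
    have hg : Measurable (fun ω => (m : ℝ) * Real.sqrt (B i * (P[Z i | F (Nat.sqrt m)]) ω) /
        ∑ k, Real.sqrt (B k * (P[Z k | F (Nat.sqrt m)]) ω)) := by
      refine Measurable.div ?_ ?_
      · exact measurable_const.mul ((measurable_const.mul (hwmeas m i)).sqrt)
      · exact Finset.measurable_sum _ fun k _ => (measurable_const.mul (hwmeas m k)).sqrt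
    exact (measurable_from_top (f := fun z : ℤ => (z : ℝ))).comp
      (measurable_const.max hg.floor)
  have halloc : ∀ m (i : Fin (n + 1)), Measurable (fun ω => ((alloc m i ω : ℤ) : ℝ)) := by
    intro m i
    by_cases hi : (i : ℕ) < n
    · exact hallocT m i hi
    · have hilast : i = Fin.last n := by
        have := i.isLt
        apply Fin.ext
        simp only [Fin.val_last]
        omega
      subst hilast
      have heq : (fun ω => ((alloc m (Fin.last n) ω : ℤ) : ℝ)) = fun ω =>
          (m : ℝ) - ∑ i ∈ Finset.univ.filter (fun i : Fin (n + 1) => (i : ℕ) < n),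
            ((alloc m i ω : ℤ) : ℝ) := by
        funext ω
        rw [hAllocLast m ω]
        push_cast
        ring
      rw [heq]
      exact measurable_const.sub (Finset.measurable_sum _ fun i hi =>
        hallocT m i (by simpa using (Finset.mem_filter.mp hi).2))
  have hGmeas : ∀ m : ℕ, AEStronglyMeasurable (fun ω =>
      (m : ℝ) * ∑ i, B i * (P[Z i | F (Nat.sqrt m)]) ω / (alloc m i ω : ℝ)) P := by
    intro m
    refine Measurable.aestronglyMeasurable ?_
    exact measurable_const.mul (Finset.measurable_sum _ fun i _ =>
      (measurable_const.mul (hwmeas m i)).div (halloc m i))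
  -- dominated convergence
  refine tendsto_integral_of_dominated_convergence
    (fun _ => ∑ i, 2 * B i / clo n B ε i) (fun m => hGmeas (m + M))
    (integrable_const _) ?_ ?_
  · -- uniform bound
    intro m
    filter_upwards [hbnd] with ω hω
    set m' : ℕ := m + M with hm'def
    have hMm' : M ≤ m' := Nat.le_add_left M m
    obtain ⟨hm'1, hm'2, hm'3⟩ := hM m' hMm'
    have hm'R : (1 : ℝ) ≤ (m' : ℝ) := by exact_mod_cast hm'1
    have hlow := det_bound hε hB (fun i => (P[Z i | F (Nat.sqrt m')]) ω)
      (fun i => (hω (Nat.sqrt m') i).1) (fun i => (hω (Nat.sqrt m') i).2)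
      (fun i => ((alloc m' i ω : ℤ) : ℝ)) m'
      (fun i hi => by simp only [hAlloc m' ω i hi]; push_cast; ring)
      (by simp only [hAllocLast m' ω]; push_cast; ring)
      hm'2 hm'3
    have hterm : ∀ i : Fin (n + 1),
        0 ≤ B i * (P[Z i | F (Nat.sqrt m')]) ω / ((alloc m' i ω : ℤ) : ℝ) ∧
        (m' : ℝ) * (B i * (P[Z i | F (Nat.sqrt m')]) ω / ((alloc m' i ω : ℤ) : ℝ))
          ≤ 2 * B i / clo n B ε i := by
      intro i
      have hapos : 0 < ((alloc m' i ω : ℤ) : ℝ) := by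
        have h1 := hlow i
        have h2 : 0 < (m' : ℝ) * clo n B ε i / 2 := by
          have := hclo i
          nlinarith
        linarith
      have hw1 := (hω (Nat.sqrt m') i).1
      have hw2 := (hω (Nat.sqrt m') i).2
      constructor
      · exact div_nonneg (mul_nonneg (hB i).le (le_trans hε.le hw1)) hapos.le
      · have h3 : B i * (P[Z i | F (Nat.sqrt m')]) ω / ((alloc m' i ω : ℤ) : ℝ)
            ≤ B i / ((m' : ℝ) * clo n B ε i / 2) := by
          refine div_le_div₀ (hB i).le ?_ ?_ (hlow i)
          · exact mul_le_of_le_one_right (hB i).le hw2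
          · have := hclo i
            nlinarith
        have h4 : (m' : ℝ) * (B i / ((m' : ℝ) * clo n B ε i / 2)) = 2 * B i / clo n B ε i := by
          have hm'0 : (m' : ℝ) ≠ 0 := by linarith
          have hc0 : clo n B ε i ≠ 0 := (hclo i).ne'
          field_simp
        calc (m' : ℝ) * (B i * (P[Z i | F (Nat.sqrt m')]) ω / ((alloc m' i ω : ℤ) : ℝ))
            ≤ (m' : ℝ) * (B i / ((m' : ℝ) * clo n B ε i / 2)) :=
              mul_le_mul_of_nonneg_left h3 (by linarith)
          _ = 2 * B i / clo n B ε i := h4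
    rw [Real.norm_eq_abs, abs_of_nonneg, Finset.mul_sum]
    · exact Finset.sum_le_sum fun i _ => (hterm i).2
    · exact mul_nonneg (by linarith) (Finset.sum_nonneg fun i _ => (hterm i).1)
  · -- a.e. pointwise convergence
    filter_upwards [hbnd, ae_all_iff.mpr hZ, ae_all_iff.mpr hlevy] with ω hω hZω hlevyω
    have hdet := det_tendsto hε hB (fun i => Z i ω) (fun i => (hZω i).1)
      (fun m i => (P[Z i | F (Nat.sqrt m)]) ω)
      (fun m i => (hω (Nat.sqrt m) i).1)
      (fun i => (hlevyω i).comp natSqrt_tendsto)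
      (fun m i => ((alloc m i ω : ℤ) : ℝ))
      (fun m i hi => by simp only [hAlloc m ω i hi]; push_cast; ring)
      (fun m => by simp only [hAllocLast m ω]; push_cast; ring)
    exact hdet.comp (tendsto_add_atTop_nat M)
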